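/- Let b be a {0,1}-decorated plane binary tree with n leaves, and let G = Cograph(b). For a leaf ℓ of b, define Φ(b,ℓ) = (b',ℓ) where b' is obtained by flipping the decorations of all ancestors of ℓ that contain ℓ in their right subtree. Define a total order on the leaves of b': ℓ < r iff their first common ancestor has decoration 0 when ℓ is in its left subtree (and decoration 1 when ℓ is in its right subtree). Then the degree in G of the vertex corresponding to ℓ equals rank_{b'}(ℓ) - 1, the number of leaves strictly smaller than ℓ in this order on b'. -/

import Mathlib

/-- Plane binary trees with `{0,1}`-decorated (`Bool`) internal nodes. -/
inductive BTree where
  | leaf : BTree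
  | node : Bool → BTree → BTree → BTree

/-- number of leaves. -/
def BTree.nLeaves : BTree → ℕ
  | .leaf => 1
  | .node _ l r => l.nLeaves + r.nLeaves

/-- The leaves of `b`, identified by their root-to-leaf paths
(`false` = left child, `true` = right child), in left-to-right order. -/
def BTree.paths : BTree → List (List Bool)
  | .leaf => [[]]
  | .node _ l r => l.paths.map (false :: ·) ++ r.paths.map (true :: ·)

/-- The leaves of `b` listed in the total order associated with the
decorations: at a node decorated `0` the leaves of the left subtree are
smaller, at a node decorated `1` the leaves of the right subtree are smaller. -/
def BTree.ordLeaves : BTree → List (List Bool)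
  | .leaf => [[]]
  | .node b l r =>
      let L := l.ordLeaves.map (false :: ·)
      let R := r.ordLeaves.map (true :: ·)
      if b then R ++ L else L ++ R

/-- `Φ` : flip the decorations of all (proper) ancestors of the leaf at path
`p` that contain this leaf in their right subtree. -/
def BTree.flipPath : BTree → List Bool → BTree
  | .leaf, _ => .leaf
  | .node b l r, [] => .node b l r
  | .node b l r, (false :: p) => .node b (l.flipPath p) r
  | .node b l r, (true :: p) => .node (!b) l (r.flipPath p)

/-- Degree, in the cograph `Cograph(b)`, of the vertex corresponding to the leaf
at path `p` : a leaf is adjacent to exactly the leaves lying in the other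
subtree of each of its ancestors decorated `1`. -/
def BTree.degOf : BTree → List Bool → ℕ
  | .leaf, _ => 0
  | .node _ _ _, [] => 0
  | .node b l r, (false :: p) => (if b then r.nLeaves else 0) + l.degOf p
  | .node b l r, (true :: p) => (if b then l.nLeaves else 0) + r.degOf p

/-- Let `b` be a `{0,1}`-decorated plane binary tree, `G = Cograph(b)`, `ℓ` a
leaf of `b` and `(b', ℓ) = Φ(b, ℓ)`.  Then the degree of (the vertex of) `ℓ`
in `G` equals `rank_{b'}(ℓ) - 1`, the number of leaves strictly smaller than
`ℓ` in the total order associated with `b'`. -/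

lemma ord_length (b : BTree) : b.ordLeaves.length = b.nLeaves := by
  induction b with
  | leaf => rfl
  | node d l r hl hr =>
    cases d <;> simp [BTree.ordLeaves, BTree.nLeaves, hl, hr, Nat.add_comm]

lemma flip_paths (b : BTree) (p : List Bool) : (b.flipPath p).paths = b.paths := by
  induction b generalizing p with
  | leaf => rfl
  | node d l r hl hr =>
    cases p with
    | nil => rfl
    | cons c q => cases c <;> simp [BTree.flipPath, BTree.paths, hl, hr]

lemma mem_ord (b : BTree) (p : List Bool) : p ∈ b.ordLeaves ↔ p ∈ b.paths := by
  induction b generalizing p with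
  | leaf => rfl
  | node d l r hl hr =>
    cases d <;>
      simp [BTree.ordLeaves, BTree.paths, hl, hr, or_comm]

lemma idx_map_cons (c : Bool) (xs : List (List Bool)) (p : List Bool) :
    (xs.map (c :: ·)).idxOf (c :: p) = xs.idxOf p := by
  induction xs with
  | nil => rfl
  | cons x xs ih =>
    simp only [List.map_cons, List.idxOf_cons, ih]
    by_cases h : p = x
    · simp [h]
    · have h2 : (c :: p) ≠ (c :: x) := by simp [h]
      simp [h, h2]

lemma not_mem_map_cons {c c' : Bool} (h : c ≠ c') (xs : List (List Bool)) (p : List Bool) :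
    (c :: p) ∉ xs.map (c' :: ·) := by
  intro hmem
  obtain ⟨x, _, he⟩ := List.mem_map.1 hmem
  injection he with h1 _
  exact h h1.symm

lemma idx_append_left {a : List Bool} {l1 l2 : List (List Bool)} (h : a ∈ l1) :
    (l1 ++ l2).idxOf a = l1.idxOf a := by
  induction l1 with
  | nil => cases h
  | cons x xs ih =>
    by_cases hx : x = a
    · simp [List.idxOf_cons, hx]
    · have : a ∈ xs := by rcases List.mem_cons.1 h with h' | h'; exact absurd h'.symm hx; exact h'
      have hne : ¬ (x == a) = true := by simp [hx]
      simp [List.idxOf_cons, hne, ih this]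

lemma idx_append_right {a : List Bool} {l1 l2 : List (List Bool)} (h : a ∉ l1) :
    (l1 ++ l2).idxOf a = l1.length + l2.idxOf a := by
  induction l1 with
  | nil => simp
  | cons x xs ih =>
    have hx : ¬ (x == a) = true := by
      simp only [beq_iff_eq]; intro hh; exact h (hh ▸ (List.mem_cons_self (a := x) (l := xs)))
    have : a ∉ xs := fun hh => h (List.mem_cons_of_mem _ hh)
    simp [List.idxOf_cons, hx, ih this, Nat.add_assoc, Nat.add_comm 1]

theorem stmt13 (b : BTree) (p : List Bool) (hp : p ∈ b.paths) :
    b.degOf p = ((b.flipPath p).ordLeaves).idxOf p := by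
  induction b generalizing p with
  | leaf =>
    simp [BTree.paths] at hp
    subst hp
    rfl
  | node d l r hl hr =>
    simp only [BTree.paths, List.mem_append, List.mem_map] at hp
    rcases hp with ⟨q, hq, rfl⟩ | ⟨q, hq, rfl⟩
    · have hmem : (false :: q) ∈ ((l.flipPath q).ordLeaves).map (false :: ·) :=
        List.mem_map_of_mem ((mem_ord _ _).2 (by rw [flip_paths]; exact hq))
      cases d
      · simp only [BTree.degOf, BTree.flipPath, BTree.ordLeaves, if_false, Bool.false_eq_true,
          Nat.zero_add]
        rw [idx_append_left hmem, idx_map_cons]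
        exact hl q hq
      · simp only [BTree.degOf, BTree.flipPath, BTree.ordLeaves, if_true]
        rw [idx_append_right (not_mem_map_cons (by simp) _ _),
          idx_map_cons, List.length_map, ord_length]
        rw [hl q hq]
    · have hmem : (true :: q) ∈ ((r.flipPath q).ordLeaves).map (true :: ·) :=
        List.mem_map_of_mem ((mem_ord _ _).2 (by rw [flip_paths]; exact hq))
      cases d
      · simp only [BTree.degOf, BTree.flipPath, BTree.ordLeaves, if_false, Bool.false_eq_true,
          Bool.not_false, if_true, Nat.zero_add]
        rw [idx_append_left hmem, idx_map_cons]
        exact hr q hq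
      · simp only [BTree.degOf, BTree.flipPath, BTree.ordLeaves, if_true, Bool.not_true,
          Bool.false_eq_true, if_false]
        rw [idx_append_right (not_mem_map_cons (by simp) _ _),
          idx_map_cons, List.length_map, ord_length]
        rw [hr q hq]
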